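/- arXiv:math/0701939 — 2 statements merged into one kernel-verified Lean document; each statement's English description precedes it below -/
import Mathlib

section
/- For f, g ∈ L^p(ℝ^m) with 1 ≤ p < ∞, the double integral of |g(y-x)f(x) - g(x-y)f(y)|^p over ℝ^m × ℝ^m is at least (∫_{ℝ^m} | |g(y)| - |g(-y)| |^p dy) · (∫_{ℝ^m} |f(x)|^p dx). -/
open Real MeasureTheory
open scoped ENNReal

-- reverse Minkowski core lemma
theorem sw_core {α : Type*} [MeasurableSpace α] {μ : Measure α} {p : ℝ} (hp : 1 ≤ p)
    (u v : α → ℂ) (hu : AEMeasurable u μ) (hv : AEMeasurable v μ) :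
    ((∫⁻ x, (‖u x‖₊ : ENNReal) ^ p ∂μ) ^ (1/p) - (∫⁻ x, (‖v x‖₊ : ENNReal) ^ p ∂μ) ^ (1/p)) ^ p
      ≤ ∫⁻ x, (‖u x - v x‖₊ : ENNReal) ^ p ∂μ := by
  have hp0 : (0:ℝ) < p := lt_of_lt_of_le one_pos hp
  set D : ℝ≥0∞ := ∫⁻ x, (‖u x - v x‖₊ : ENNReal) ^ p ∂μ with hD
  have key : (∫⁻ x, (‖u x‖₊ : ENNReal) ^ p ∂μ) ^ (1/p)
      ≤ D ^ (1/p) + (∫⁻ x, (‖v x‖₊ : ENNReal) ^ p ∂μ) ^ (1/p) := by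
    have step : (∫⁻ x, (‖u x‖₊ : ENNReal) ^ p ∂μ) ^ (1/p)
        ≤ (∫⁻ x, ((‖u x - v x‖₊ : ENNReal) + (‖v x‖₊ : ENNReal)) ^ p ∂μ) ^ (1/p) := by
      gcongr with x
      calc (‖u x‖₊ : ENNReal) = (‖u x - v x + v x‖₊ : ENNReal) := by rw [sub_add_cancel]
          _ ≤ (‖u x - v x‖₊ : ENNReal) + (‖v x‖₊ : ENNReal) := by
              exact_mod_cast nnnorm_add_le _ _
    refine step.trans ?_
    exact ENNReal.lintegral_Lp_add_le ((hu.sub hv).enorm) (hv.enorm) hp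
  have h2 : (∫⁻ x, (‖u x‖₊ : ENNReal) ^ p ∂μ) ^ (1/p)
      - (∫⁻ x, (‖v x‖₊ : ENNReal) ^ p ∂μ) ^ (1/p) ≤ D ^ (1/p) :=
    tsub_le_iff_right.mpr key
  calc ((∫⁻ x, (‖u x‖₊ : ENNReal) ^ p ∂μ) ^ (1/p)
        - (∫⁻ x, (‖v x‖₊ : ENNReal) ^ p ∂μ) ^ (1/p)) ^ p
      ≤ (D ^ (1/p)) ^ p := by gcongr
    _ = D := by rw [← ENNReal.rpow_mul, one_div_mul_cancel (ne_of_gt hp0), ENNReal.rpow_one]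

theorem sw_aux2 {α : Type*} [MeasurableSpace α] {μ : Measure α} {p : ℝ} (hp : 1 ≤ p)
    (u v : α → ℂ) (hu : AEMeasurable u μ) (hv : AEMeasurable v μ)
    (A B N : ℝ≥0∞) (hA : ∫⁻ x, (‖u x‖₊ : ℝ≥0∞) ^ p ∂μ = A ^ p * N)
    (hB : ∫⁻ x, (‖v x‖₊ : ℝ≥0∞) ^ p ∂μ = B ^ p * N)
    (hN : N ≠ ∞) :
    (A - B) ^ p * N ≤ ∫⁻ x, (‖u x - v x‖₊ : ℝ≥0∞) ^ p ∂μ := by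
  have hp0 : (0:ℝ) < p := lt_of_lt_of_le one_pos hp
  have hrw : ∀ C : ℝ≥0∞, (C ^ p * N) ^ (1/p) = C * N ^ (1/p) := by
    intro C
    rw [ENNReal.mul_rpow_of_nonneg _ _ (by positivity), ← ENNReal.rpow_mul,
      mul_one_div_cancel (ne_of_gt hp0), ENNReal.rpow_one]
  have := sw_core hp u v hu hv
  rw [hA, hB, hrw, hrw] at this
  refine le_trans (le_of_eq ?_) this
  rw [← ENNReal.sub_mul (fun _ _ => ENNReal.rpow_ne_top_of_nonneg (by positivity) hN),
    ENNReal.mul_rpow_of_nonneg _ _ (by positivity), ← ENNReal.rpow_mul,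
    one_div_mul_cancel (ne_of_gt hp0), ENNReal.rpow_one]

theorem sw_slice {m : ℕ} {p : ℝ} (hp : 1 ≤ p) (f g : EuclideanSpace ℝ (Fin m) → ℂ)
    (hfm : AEMeasurable f volume)
    (hN : (∫⁻ x, (‖f x‖₊ : ℝ≥0∞) ^ p) ≠ ∞) (z : EuclideanSpace ℝ (Fin m)) :
    ENNReal.ofReal (|‖g z‖ - ‖g (-z)‖| ^ p) * (∫⁻ x, (‖f x‖₊ : ℝ≥0∞) ^ p)
      ≤ ∫⁻ x, (‖g z * f x - g (-z) * f (x + z)‖₊ : ℝ≥0∞) ^ p := by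
  have hp0 : (0:ℝ) < p := lt_of_lt_of_le one_pos hp
  set N : ℝ≥0∞ := ∫⁻ x, (‖f x‖₊ : ℝ≥0∞) ^ p with hNdef
  have hfz : AEMeasurable (fun x => f (x + z)) volume :=
    hfm.comp_quasiMeasurePreserving (measurePreserving_add_right volume z).quasiMeasurePreserving
  have hmulint : ∀ e : ℂ, (∫⁻ x, (‖e * f x‖₊ : ℝ≥0∞) ^ p) = (‖e‖₊ : ℝ≥0∞) ^ p * N := by
    intro e
    simp_rw [nnnorm_mul, ENNReal.coe_mul,
      ENNReal.mul_rpow_of_nonneg _ _ (le_of_lt hp0)]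
    exact lintegral_const_mul' _ _
      (ENNReal.rpow_ne_top_of_nonneg (le_of_lt hp0) ENNReal.coe_ne_top)
  have htrans : ∀ e : ℂ, (∫⁻ x, (‖e * f (x + z)‖₊ : ℝ≥0∞) ^ p) = (‖e‖₊ : ℝ≥0∞) ^ p * N := by
    intro e
    rw [lintegral_add_right_eq_self (fun x => (‖e * f x‖₊ : ℝ≥0∞) ^ p) z]
    exact hmulint e
  have hofreal : ∀ r s : ℝ, 0 ≤ s → s ≤ r →
      ENNReal.ofReal ((r - s) ^ p) = (ENNReal.ofReal r - ENNReal.ofReal s) ^ p := by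
    intro r s hs hsr
    rw [← ENNReal.ofReal_rpow_of_nonneg (sub_nonneg.mpr hsr) (le_of_lt hp0),
      ENNReal.ofReal_sub _ hs]
  rcases le_total ‖g (-z)‖ ‖g z‖ with hle | hle
  · rw [abs_of_nonneg (sub_nonneg.mpr hle), hofreal _ _ (norm_nonneg _) hle,
      ofReal_norm, ofReal_norm]
    exact sw_aux2 hp (fun x => g z * f x) (fun x => g (-z) * f (x + z))
      (hfm.const_mul _) (hfz.const_mul _) _ _ N (hmulint _) (htrans _) hN
  · rw [abs_of_nonpos (sub_nonpos.mpr hle), neg_sub, hofreal _ _ (norm_nonneg _) hle,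
      ofReal_norm, ofReal_norm]
    have h := sw_aux2 hp (fun x => g (-z) * f (x + z)) (fun x => g z * f x)
      (hfz.const_mul _) (hfm.const_mul _) _ _ N (htrans _) (hmulint _) hN
    have hrev : ∀ a b : ℂ, ‖a - b‖₊ = ‖b - a‖₊ := fun a b => by rw [← neg_sub, nnnorm_neg]
    simp_rw [hrev (g (-z) * f (_ + z))] at h
    exact h

theorem nonlinear_stein_weiss_lemma (m : ℕ) (p : ℝ) (hp : 1 ≤ p)
    (f g : EuclideanSpace ℝ (Fin m) → ℂ)
    (hf : MemLp f (ENNReal.ofReal p) volume) (hg : MemLp g (ENNReal.ofReal p) volume) :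
    (∫⁻ x : EuclideanSpace ℝ (Fin m), ∫⁻ y : EuclideanSpace ℝ (Fin m),
        (‖g (y - x) * f x - g (x - y) * f y‖₊ : ENNReal) ^ p) ≥
      (∫⁻ y : EuclideanSpace ℝ (Fin m), ENNReal.ofReal (|‖g y‖ - ‖g (-y)‖| ^ p)) *
        ∫⁻ x : EuclideanSpace ℝ (Fin m), (‖f x‖₊ : ENNReal) ^ p := by
  have hp0 : (0:ℝ) < p := lt_of_lt_of_le one_pos hp
  have hfm : AEMeasurable f volume := hf.1.aemeasurable
  have hgm : AEMeasurable g volume := hg.1.aemeasurable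
  set N : ℝ≥0∞ := ∫⁻ x : (EuclideanSpace ℝ (Fin m)), (‖f x‖₊ : ℝ≥0∞) ^ p with hNdef
  -- finiteness of N
  have hN : N ≠ ∞ := by
    have h1 := hf.2
    rw [eLpNorm_eq_lintegral_rpow_enorm_toReal (by simp [ENNReal.ofReal_eq_zero, not_le, hp0])
      ENNReal.ofReal_ne_top, ENNReal.toReal_ofReal (le_of_lt hp0)] at h1
    change (∫⁻ x, (‖f x‖₊ : ℝ≥0∞) ^ p) ^ (1 / p) < ∞ at h1
    intro hcon
    rw [← hNdef, hcon, ENNReal.top_rpow_of_pos (by positivity)] at h1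
    exact (lt_irrefl _ h1).elim
  -- the product-space function
  set F : (EuclideanSpace ℝ (Fin m)) × (EuclideanSpace ℝ (Fin m)) → ℝ≥0∞ :=
    fun q => (‖g (q.2 - q.1) * f q.1 - g (q.1 - q.2) * f q.2‖₊ : ℝ≥0∞) ^ p with hFdef
  have hq1 : Measure.QuasiMeasurePreserving (fun q : (EuclideanSpace ℝ (Fin m)) × (EuclideanSpace ℝ (Fin m)) => q.2 - q.1)
      (volume.prod volume) volume := by
    have h1 := (measurePreserving_sub_prod (volume : Measure (EuclideanSpace ℝ (Fin m))) volume).quasiMeasurePreserving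
    have h2 := Measure.quasiMeasurePreserving_fst (μ := (volume : Measure (EuclideanSpace ℝ (Fin m))))
      (ν := (volume : Measure (EuclideanSpace ℝ (Fin m))))
    have h3 := (Measure.measurePreserving_swap (μ := (volume : Measure (EuclideanSpace ℝ (Fin m))))
      (ν := (volume : Measure (EuclideanSpace ℝ (Fin m))))).quasiMeasurePreserving
    exact (h2.comp h1).comp h3
  have hq2 : Measure.QuasiMeasurePreserving (fun q : (EuclideanSpace ℝ (Fin m)) × (EuclideanSpace ℝ (Fin m)) => q.1 - q.2)
      (volume.prod volume) volume := by
    have h1 := (measurePreserving_sub_prod (volume : Measure (EuclideanSpace ℝ (Fin m))) volume).quasiMeasurePreserving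
    exact Measure.quasiMeasurePreserving_fst.comp h1
  have hF : AEMeasurable F (volume.prod volume) := by
    apply AEMeasurable.pow_const
    apply AEMeasurable.coe_nnreal_ennreal
    apply AEMeasurable.nnnorm
    exact ((hgm.comp_quasiMeasurePreserving hq1).mul
        (hfm.comp_quasiMeasurePreserving Measure.quasiMeasurePreserving_fst)).sub
      ((hgm.comp_quasiMeasurePreserving hq2).mul
        (hfm.comp_quasiMeasurePreserving Measure.quasiMeasurePreserving_snd))
  have hT : MeasurePreserving (fun q : (EuclideanSpace ℝ (Fin m)) × (EuclideanSpace ℝ (Fin m)) => (q.2, q.2 + q.1))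
      (volume.prod volume) (volume.prod volume) :=
    measurePreserving_prod_add_swap volume volume
  calc (∫⁻ y : (EuclideanSpace ℝ (Fin m)), ENNReal.ofReal (|‖g y‖ - ‖g (-y)‖| ^ p)) * N
      = ∫⁻ z : (EuclideanSpace ℝ (Fin m)), ENNReal.ofReal (|‖g z‖ - ‖g (-z)‖| ^ p) * N :=
        (lintegral_mul_const' N _ hN).symm
    _ ≤ ∫⁻ z : (EuclideanSpace ℝ (Fin m)), ∫⁻ x : (EuclideanSpace ℝ (Fin m)), (‖g z * f x - g (-z) * f (x + z)‖₊ : ℝ≥0∞) ^ p :=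
        lintegral_mono fun z => sw_slice hp f g hfm hN z
    _ = ∫⁻ z : (EuclideanSpace ℝ (Fin m)), ∫⁻ x : (EuclideanSpace ℝ (Fin m)), F (x, x + z) := by
        congr 1; funext z; congr 1; funext x
        simp only [hFdef, add_sub_cancel_left, sub_add_cancel_left]
    _ = ∫⁻ q : (EuclideanSpace ℝ (Fin m)) × (EuclideanSpace ℝ (Fin m)), F ((fun q : (EuclideanSpace ℝ (Fin m)) × (EuclideanSpace ℝ (Fin m)) => (q.2, q.2 + q.1)) q) ∂(volume.prod volume) :=
        (lintegral_prod _ (hF.comp_quasiMeasurePreserving hT.quasiMeasurePreserving)).symm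
    _ = ∫⁻ q : (EuclideanSpace ℝ (Fin m)) × (EuclideanSpace ℝ (Fin m)), F q ∂(volume.prod volume) := by
        conv_rhs => rw [← hT.map_eq]
        exact (lintegral_map' (by rw [hT.map_eq]; exact hF) hT.aemeasurable).symm
    _ = ∫⁻ x : (EuclideanSpace ℝ (Fin m)), ∫⁻ y : (EuclideanSpace ℝ (Fin m)), F (x, y) := lintegral_prod _ hF
end

section
/- For 0 < α < min(2, n), the function σ ↦ Γ((n+α)/4 - σ/2) Γ((n+α)/4 + σ/2) / [Γ((n-α)/4 + σ/2) Γ((n-α)/4 - σ/2)], defined for -(n-α)/2 < σ < (n-α)/2, is symmetric in σ, concave, and attains its maximum at σ = 0, where its value is [Γ((n+α)/4)/Γ((n-α)/4)]². -/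
open Real Set Finset

namespace LambdaAux

/-- convexity of `s ↦ (c - s)⁻¹` on `(-∞, c)` -/
lemma convexOn_inv_sub (c : ℝ) : ConvexOn ℝ (Set.Iio c) (fun s => (c - s)⁻¹) := by
  refine ⟨convex_Iio c, fun x hx y hy p q hp hq hpq => ?_⟩
  simp only [smul_eq_mul]
  have hu : 0 < c - x := sub_pos.2 hx
  have hv : 0 < c - y := sub_pos.2 hy
  have hm : c - (p * x + q * y) = p * (c - x) + q * (c - y) := by
    linear_combination (-c) * hpq
  rw [hm]
  have hpu : 0 < p * (c - x) + q * (c - y) := by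
    rcases hp.lt_or_eq with hp' | hp'
    · exact add_pos_of_pos_of_nonneg (mul_pos hp' hu) (mul_nonneg hq hv.le)
    · have hq1 : q = 1 := by linarith
      rw [← hp', hq1]; simpa using hv
  rw [inv_eq_one_div, div_le_iff₀ hpu]
  rw [inv_eq_one_div, inv_eq_one_div]
  field_simp
  have hq' : q = 1 - p := by linarith
  subst hq'
  nlinarith [mul_nonneg (mul_nonneg hp (by linarith : (0:ℝ) ≤ 1 - p)) (sq_nonneg (x - y))]

lemma convexOn_inv_add (c : ℝ) : ConvexOn ℝ (Set.Ioi (-c)) (fun s => (c + s)⁻¹) := by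
  refine ⟨convex_Ioi _, fun x hx y hy p q hp hq hpq => ?_⟩
  simp only [smul_eq_mul]
  have hx' : -c < x := hx
  have hy' : -c < y := hy
  have hu : 0 < c + x := by linarith
  have hv : 0 < c + y := by linarith
  have hm : c + (p * x + q * y) = p * (c + x) + q * (c + y) := by
    linear_combination (-c) * hpq
  rw [hm]
  have hpu : 0 < p * (c + x) + q * (c + y) := by
    rcases hp.lt_or_eq with hp' | hp'
    · exact add_pos_of_pos_of_nonneg (mul_pos hp' hu) (mul_nonneg hq hv.le)
    · have hq1 : q = 1 := by linarith
      rw [← hp', hq1]; simpa using hv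
  rw [inv_eq_one_div, div_le_iff₀ hpu]
  rw [inv_eq_one_div, inv_eq_one_div]
  field_simp
  have hq' : q = 1 - p := by linarith
  subst hq'
  nlinarith [mul_nonneg (mul_nonneg hp (by linarith : (0:ℝ) ≤ 1 - p)) (sq_nonneg (x - y))]


lemma convexOn_finset_sum {ι : Type*} {S : Set ℝ} (hS : Convex ℝ S) (t : Finset ι)
    (f : ι → ℝ → ℝ) (h : ∀ i ∈ t, ConvexOn ℝ S (f i)) :
    ConvexOn ℝ S fun x => ∑ i ∈ t, f i x := by
  classical
  induction t using Finset.induction_on with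
  | empty => simpa using convexOn_const (0 : ℝ) hS
  | @insert i t hi ih =>
    simp only [Finset.sum_insert hi]
    exact (h i (Finset.mem_insert_self _ _)).add (ih fun j hj => h j (Finset.mem_insert_of_mem hj))

lemma concaveOn_congr {S : Set ℝ} {f g : ℝ → ℝ} (h : ConcaveOn ℝ S f)
    (hfg : ∀ x ∈ S, f x = g x) : ConcaveOn ℝ S g := by
  refine ⟨h.1, fun x hx y hy p q hp hq hpq => ?_⟩
  rw [← hfg x hx, ← hfg y hy, ← hfg _ (h.1 hx hy hp hq hpq)]
  exact h.2 hx hy hp hq hpq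

lemma concaveOn_of_tendsto {S : Set ℝ} (hS : Convex ℝ S) {F : ℕ → ℝ → ℝ} {f : ℝ → ℝ}
    (hF : ∀ n : ℕ, 1 ≤ n → ConcaveOn ℝ S (F n))
    (hlim : ∀ x ∈ S, Filter.Tendsto (fun n => F n x) Filter.atTop (nhds (f x))) :
    ConcaveOn ℝ S f := by
  refine ⟨hS, fun x hx y hy p q hp hq hpq => ?_⟩
  have hmem : p • x + q • y ∈ S := hS hx hy hp hq hpq
  have h1 : Filter.Tendsto (fun n => p • F n x + q • F n y) Filter.atTop
      (nhds (p • f x + q • f y)) := ((hlim x hx).const_smul p).add ((hlim y hy).const_smul q)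
  refine le_of_tendsto_of_tendsto h1 (hlim _ hmem) ?_
  filter_upwards [Filter.eventually_ge_atTop 1] with n hn
  exact (hF n hn).2 hx hy hp hq hpq


noncomputable def R (a b : ℝ) (n : ℕ) (s : ℝ) : ℝ :=
  ∏ k ∈ Finset.range (n + 1), (b + k - s) / (a + k - s)

lemma R_pos {a b : ℝ} (hb : 0 < b) (hba : b < a) {n : ℕ} {s : ℝ} (hs : s < b) :
    0 < R a b n s := by
  refine Finset.prod_pos fun k _ => div_pos ?_ ?_
  · have : (0:ℝ) ≤ (k:ℝ) := Nat.cast_nonneg k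
    linarith
  · have : (0:ℝ) ≤ (k:ℝ) := Nat.cast_nonneg k
    linarith

lemma R_identity {a b : ℝ} (hb : 0 < b) (hba : b < a) (hab1 : a < b + 1) :
    ∀ n : ℕ, ∃ e : ℕ → ℝ, (∀ j, 0 ≤ e j) ∧
      ∀ s : ℝ, s < b → R a b n s = 1 - ∑ j ∈ Finset.range (n + 1), e j / (a + j - s) := by
  have hd0 : 0 ≤ a - b := by linarith
  have hd1 : a - b < 1 := by linarith
  intro n
  induction n with
  | zero =>
    refine ⟨fun j => if j = 0 then a - b else 0, ?_, ?_⟩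
    · intro j; by_cases hj : j = 0 <;> simp [hj, hd0]
    · intro s hs
      have ha : a + ((0:ℕ):ℝ) - s ≠ 0 := by push_cast; intro h; nlinarith
      simp only [R, zero_add, Finset.prod_range_one, Finset.sum_range_one, if_pos rfl]
      rw [eq_sub_iff_add_eq, ← add_div, div_eq_one_iff_eq ha]
      push_cast
      ring
  | succ n ih =>
    obtain ⟨e, he0, hei⟩ := ih
    classical
    set e' : ℕ → ℝ := fun j => if j = n + 1 then
        (a - b) * (1 + ∑ i ∈ Finset.range (n + 1), e i / ((n:ℝ) + 1 - i))
      else e j * (1 - (a - b) / ((n:ℝ) + 1 - j)) with he'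
    refine ⟨e', ?_, ?_⟩
    · intro j
      simp only [he']
      by_cases hj : j = n + 1
      · rw [if_pos hj]
        refine mul_nonneg hd0 ?_
        have hsum : (0:ℝ) ≤ ∑ i ∈ Finset.range (n + 1), e i / ((n:ℝ) + 1 - i) := by
          refine Finset.sum_nonneg fun i hi => div_nonneg (he0 i) ?_
          have : (i:ℝ) ≤ n := by
            exact_mod_cast Nat.lt_succ_iff.mp (Finset.mem_range.mp hi)
          linarith
        linarith
      · rw [if_neg hj]
        rcases lt_or_gt_of_ne hj with h | h
        · have hj' : (j:ℝ) ≤ n := by exact_mod_cast Nat.lt_succ_iff.mp h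
          have hx : (1:ℝ) ≤ (n:ℝ) + 1 - j := by linarith
          have : (a - b) / ((n:ℝ) + 1 - j) ≤ a - b := div_le_self hd0 hx
          exact mul_nonneg (he0 j) (by linarith)
        · have hj' : (n:ℝ) + 2 ≤ (j:ℝ) := by exact_mod_cast h
          have hx : (n:ℝ) + 1 - j ≤ -1 := by linarith
          have : (a - b) / ((n:ℝ) + 1 - j) ≤ 0 :=
            div_nonpos_iff.mpr (Or.inl ⟨hd0, by linarith⟩)
          exact mul_nonneg (he0 j) (by linarith)
    · intro s hs
      have hA : 0 < a + ((n:ℝ) + 1) - s := by linarith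
      have hR : R a b (n + 1) s
          = R a b n s * ((b + ((n:ℝ) + 1) - s) / (a + ((n:ℝ) + 1) - s)) := by
        simp only [R, Finset.prod_range_succ]
        push_cast
        ring
      have hfac : (b + ((n:ℝ) + 1) - s) / (a + ((n:ℝ) + 1) - s)
          = 1 - (a - b) / (a + ((n:ℝ) + 1) - s) := by
        field_simp
        ring
      have hSd : (∑ j ∈ Finset.range (n + 1), e j / (a + j - s)) * ((a - b) / (a + ((n:ℝ) + 1) - s))
          = (∑ j ∈ Finset.range (n + 1), (e j * ((a - b) / ((n:ℝ) + 1 - j))) / (a + j - s))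
            - (∑ j ∈ Finset.range (n + 1), e j * ((a - b) / ((n:ℝ) + 1 - j))) / (a + ((n:ℝ) + 1) - s) := by
        rw [Finset.sum_mul, Finset.sum_div, ← Finset.sum_sub_distrib]
        refine Finset.sum_congr rfl fun j hj => ?_
        have hj' : (j:ℝ) ≤ n := by
          exact_mod_cast Nat.lt_succ_iff.mp (Finset.mem_range.mp hj)
        have hj0 : (0:ℝ) ≤ (j:ℝ) := Nat.cast_nonneg j
        have hx : (0:ℝ) < a + j - s := by linarith
        have hc : (0:ℝ) < (n:ℝ) + 1 - j := by linarith
        field_simp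
        ring
      have hsum' : ∑ j ∈ Finset.range (n + 1),
            (if j = n + 1 then (a - b) * (1 + ∑ i ∈ Finset.range (n + 1), e i / ((n:ℝ) + 1 - i))
              else e j * (1 - (a - b) / ((n:ℝ) + 1 - j))) / (a + j - s)
          = (∑ j ∈ Finset.range (n + 1), e j / (a + j - s))
            - (∑ j ∈ Finset.range (n + 1), (e j * ((a - b) / ((n:ℝ) + 1 - j))) / (a + j - s)) := by
        rw [← Finset.sum_sub_distrib]
        refine Finset.sum_congr rfl fun j hj => ?_
        have hj' : j ≠ n + 1 := by
          have := Finset.mem_range.mp hj; omega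
        rw [if_neg hj']
        ring
      have hV : (a - b) * (1 + ∑ i ∈ Finset.range (n + 1), e i / ((n:ℝ) + 1 - i))
          = (a - b) + ∑ j ∈ Finset.range (n + 1), e j * ((a - b) / ((n:ℝ) + 1 - j)) := by
        rw [mul_add, mul_one, Finset.mul_sum]
        congr 1
        exact Finset.sum_congr rfl fun j _ => by ring
      rw [hR, hei s hs, hfac]
      conv_rhs => rw [Finset.sum_range_succ]
      simp only [he', eq_self_iff_true, if_true]
      rw [hsum']
      push_cast
      rw [hV, add_div]
      set S := ∑ j ∈ Finset.range (n + 1), e j / (a + j - s)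
      set U := ∑ j ∈ Finset.range (n + 1), (e j * ((a - b) / ((n:ℝ) + 1 - j))) / (a + j - s)
      set V := ∑ j ∈ Finset.range (n + 1), e j * ((a - b) / ((n:ℝ) + 1 - j))
      have expand : (1 - S) * (1 - (a - b) / (a + ((n:ℝ) + 1) - s))
          = 1 - S - (a - b) / (a + ((n:ℝ) + 1) - s) + S * ((a - b) / (a + ((n:ℝ) + 1) - s)) := by
        ring
      rw [expand, hSd]
      ring


variable {a b : ℝ}

lemma Ioo_subset_Iio {j : ℕ} (hb : 0 < b) (hba : b < a) :
    Set.Ioo (-b) b ⊆ Set.Iio (a + (j:ℝ)) := by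
  intro x hx
  have : (0:ℝ) ≤ (j:ℝ) := Nat.cast_nonneg j
  have := hx.2
  simp only [Set.mem_Iio]
  linarith

lemma Ioo_subset_Ioi {j : ℕ} (hb : 0 < b) (hba : b < a) :
    Set.Ioo (-b) b ⊆ Set.Ioi (-(a + (j:ℝ))) := by
  intro x hx
  have : (0:ℝ) ≤ (j:ℝ) := Nat.cast_nonneg j
  have := hx.1
  simp only [Set.mem_Ioi]
  linarith

lemma concave_one_sub_sum {n : ℕ} {e : ℕ → ℝ} (hb : 0 < b) (hba : b < a)
    (he0 : ∀ j, 0 ≤ e j) :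
    ConcaveOn ℝ (Set.Ioo (-b) b)
      (fun s => 1 - ∑ j ∈ Finset.range (n + 1), e j / (a + j - s)) := by
  have hconv : ConvexOn ℝ (Set.Ioo (-b) b)
      (fun s => ∑ j ∈ Finset.range (n + 1), e j / (a + j - s)) := by
    refine convexOn_finset_sum (convex_Ioo _ _) (Finset.range (n + 1))
      (fun j s => e j / (a + j - s)) fun j _ => ?_
    have h1 := ((convexOn_inv_sub (a + (j:ℝ))).subset (Ioo_subset_Iio hb hba)
      (convex_Ioo _ _)).smul (he0 j)
    simpa [smul_eq_mul, div_eq_mul_inv] using h1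
  have h2 := hconv.neg.add_const (1:ℝ)
  exact concaveOn_congr h2 (fun x _ => by simp; ring)

lemma concave_one_sub_sum' {n : ℕ} {e : ℕ → ℝ} (hb : 0 < b) (hba : b < a)
    (he0 : ∀ j, 0 ≤ e j) :
    ConcaveOn ℝ (Set.Ioo (-b) b)
      (fun s => 1 - ∑ j ∈ Finset.range (n + 1), e j / (a + j + s)) := by
  have hconv : ConvexOn ℝ (Set.Ioo (-b) b)
      (fun s => ∑ j ∈ Finset.range (n + 1), e j / (a + j + s)) := by
    refine convexOn_finset_sum (convex_Ioo _ _) (Finset.range (n + 1))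
      (fun j s => e j / (a + j + s)) fun j _ => ?_
    have h1 := ((convexOn_inv_add (a + (j:ℝ))).subset (Ioo_subset_Ioi hb hba)
      (convex_Ioo _ _)).smul (he0 j)
    simpa [smul_eq_mul, div_eq_mul_inv] using h1
  have h2 := hconv.neg.add_const (1:ℝ)
  exact concaveOn_congr h2 (fun x _ => by simp; ring)

lemma R_concave (hb : 0 < b) (hba : b < a) (hab1 : a < b + 1) (n : ℕ) :
    ConcaveOn ℝ (Set.Ioo (-b) b) (R a b n) := by
  obtain ⟨e, he0, hei⟩ := R_identity hb hba hab1 n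
  exact concaveOn_congr (concave_one_sub_sum hb hba he0) fun x hx => (hei x hx.2).symm

lemma R_neg_concave (hb : 0 < b) (hba : b < a) (hab1 : a < b + 1) (n : ℕ) :
    ConcaveOn ℝ (Set.Ioo (-b) b) (fun s => R a b n (-s)) := by
  obtain ⟨e, he0, hei⟩ := R_identity hb hba hab1 n
  refine concaveOn_congr (concave_one_sub_sum' (n := n) hb hba he0) fun x hx => ?_
  have hx1 : -x < b := by have := hx.1; linarith
  rw [hei (-x) hx1]
  congr 1
  exact Finset.sum_congr rfl fun j _ => by rw [sub_neg_eq_add]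

lemma R_anti (hb : 0 < b) (hba : b < a) (hab1 : a < b + 1) (n : ℕ)
    {x y : ℝ} (hx : x ∈ Set.Ioo (-b) b) (hy : y ∈ Set.Ioo (-b) b) (hxy : x ≤ y) :
    R a b n y ≤ R a b n x := by
  obtain ⟨e, he0, hei⟩ := R_identity hb hba hab1 n
  rw [hei x hx.2, hei y hy.2]
  refine sub_le_sub_left (Finset.sum_le_sum fun j _ => ?_) 1
  have hj0 : (0:ℝ) ≤ (j:ℝ) := Nat.cast_nonneg j
  have hdy : 0 < a + j - y := by have := hy.2; linarith
  have hdx : 0 < a + j - x := by have := hx.2; linarith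
  exact div_le_div_of_nonneg_left (he0 j) hdy (by linarith)

lemma R_antivary (hb : 0 < b) (hba : b < a) (hab1 : a < b + 1) (n : ℕ) :
    AntivaryOn (R a b n) (fun s => R a b n (-s)) (Set.Ioo (-b) b) := by
  intro i hi j hj hg
  rcases le_total i j with h | h
  · exact R_anti hb hba hab1 n hi hj h
  · exfalso
    have hi' : -i ∈ Set.Ioo (-b) b := by
      constructor
      · have := hi.2; linarith
      · have := hi.1; linarith
    have hj' : -j ∈ Set.Ioo (-b) b := by
      constructor
      · have := hj.2; linarith
      · have := hj.1; linarith
    have := R_anti hb hba hab1 n hi' hj' (by linarith)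
    simp only at hg
    linarith

lemma prod_concave (hb : 0 < b) (hba : b < a) (hab1 : a < b + 1) (n : ℕ) :
    ConcaveOn ℝ (Set.Ioo (-b) b) (fun s => R a b n s * R a b n (-s)) := by
  have h := (R_concave hb hba hab1 n).mul (R_neg_concave hb hba hab1 n)
    (fun x hx => (R_pos hb hba hx.2).le)
    (fun x hx => (R_pos hb hba (by have := hx.1; linarith : -x < b)).le)
    (R_antivary hb hba hab1 n)
  exact h


lemma R_eq_div (n : ℕ) (s : ℝ) :
    R a b n s = (∏ j ∈ Finset.range (n + 1), ((b - s) + j)) /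
      (∏ j ∈ Finset.range (n + 1), ((a - s) + j)) := by
  rw [R, Finset.prod_div_distrib]
  congr 1 <;> exact Finset.prod_congr rfl fun k _ => by ring

lemma gammaSeq_ratio (hb : 0 < b) (hba : b < a) {n : ℕ} (hn : 1 ≤ n) {s : ℝ}
    (hs : s ∈ Set.Ioo (-b) b) :
    Real.GammaSeq (a - s) n * Real.GammaSeq (a + s) n /
      (Real.GammaSeq (b + s) n * Real.GammaSeq (b - s) n)
    = (n:ℝ) ^ (2 * a - 2 * b) * (R a b n s * R a b n (-s)) := by
  have hs1 := hs.1
  have hs2 := hs.2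
  have hnp : (0:ℝ) < n := by exact_mod_cast hn
  have hprod : ∀ x : ℝ, 0 < x → (0:ℝ) < ∏ j ∈ Finset.range (n + 1), (x + j) := by
    intro x hx
    refine Finset.prod_pos fun j _ => ?_
    have : (0:ℝ) ≤ (j:ℝ) := Nat.cast_nonneg j
    linarith
  have has : 0 < a - s := by linarith
  have has' : 0 < a + s := by linarith
  have hbs : 0 < b + s := by linarith
  have hbs' : 0 < b - s := by linarith
  have h2 : (n:ℝ) ^ (a - s) * (n:ℝ) ^ (a + s) / ((n:ℝ) ^ (b + s) * (n:ℝ) ^ (b - s))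
      = (n:ℝ) ^ (2 * a - 2 * b) := by
    rw [← Real.rpow_add hnp, ← Real.rpow_add hnp, ← Real.rpow_sub hnp]
    congr 1
    ring
  have hfac : ((Nat.factorial n : ℕ) : ℝ) ≠ 0 := Nat.cast_ne_zero.2 (Nat.factorial_ne_zero n)
  have hP1 : (∏ j ∈ Finset.range (n + 1), ((a - s) + j)) ≠ 0 := (hprod _ has).ne'
  have hP2 : (∏ j ∈ Finset.range (n + 1), ((a + s) + j)) ≠ 0 := (hprod _ has').ne'
  have hP3 : (∏ j ∈ Finset.range (n + 1), ((b + s) + j)) ≠ 0 := (hprod _ hbs).ne'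
  have hP4 : (∏ j ∈ Finset.range (n + 1), ((b - s) + j)) ≠ 0 := (hprod _ hbs').ne'
  have hn1 : (n:ℝ) ^ (b + s) ≠ 0 := (Real.rpow_pos_of_pos hnp _).ne'
  have hn2 : (n:ℝ) ^ (b - s) ≠ 0 := (Real.rpow_pos_of_pos hnp _).ne'
  have key : Real.GammaSeq (a - s) n * Real.GammaSeq (a + s) n /
      (Real.GammaSeq (b + s) n * Real.GammaSeq (b - s) n)
      = ((n:ℝ) ^ (a - s) * (n:ℝ) ^ (a + s) / ((n:ℝ) ^ (b + s) * (n:ℝ) ^ (b - s))) *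
        ((∏ j ∈ Finset.range (n + 1), ((b + s) + j)) *
          (∏ j ∈ Finset.range (n + 1), ((b - s) + j)) /
          ((∏ j ∈ Finset.range (n + 1), ((a - s) + j)) *
            (∏ j ∈ Finset.range (n + 1), ((a + s) + j)))) := by
    simp only [Real.GammaSeq]
    field_simp
  rw [key, h2, R_eq_div, R_eq_div]
  simp only [sub_neg_eq_add]
  ring

lemma master (hb : 0 < b) (hba : b < a) (hab1 : a < b + 1) :
    ConcaveOn ℝ (Set.Ioo (-b) b)
      (fun s => Real.Gamma (a - s) * Real.Gamma (a + s) /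
        (Real.Gamma (b + s) * Real.Gamma (b - s))) := by
  refine concaveOn_of_tendsto (convex_Ioo _ _)
    (F := fun n s => Real.GammaSeq (a - s) n * Real.GammaSeq (a + s) n /
      (Real.GammaSeq (b + s) n * Real.GammaSeq (b - s) n)) ?_ ?_
  · intro n hn
    have hnp : (0:ℝ) < n := by exact_mod_cast hn
    have hc : (0:ℝ) ≤ (n:ℝ) ^ (2 * a - 2 * b) := (Real.rpow_pos_of_pos hnp _).le
    have h := (prod_concave hb hba hab1 n).smul hc
    refine concaveOn_congr h fun x hx => ?_
    rw [smul_eq_mul]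
    exact (gammaSeq_ratio hb hba hn hx).symm
  · intro x hx
    have hbx : 0 < b + x := by have := hx.1; linarith
    have hbx' : 0 < b - x := by have := hx.2; linarith
    have hne : Real.Gamma (b + x) * Real.Gamma (b - x) ≠ 0 :=
      (mul_pos (Real.Gamma_pos_of_pos hbx) (Real.Gamma_pos_of_pos hbx')).ne'
    exact ((Real.GammaSeq_tendsto_Gamma (a - x)).mul
      (Real.GammaSeq_tendsto_Gamma (a + x))).div
      ((Real.GammaSeq_tendsto_Gamma (b + x)).mul
        (Real.GammaSeq_tendsto_Gamma (b - x))) hne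

lemma half_scale {c : ℝ} {f : ℝ → ℝ} (h : ConcaveOn ℝ (Set.Ioo (-c) c) f) :
    ConcaveOn ℝ (Set.Ioo (-(2 * c)) (2 * c)) (fun σ => f (σ / 2)) := by
  refine ⟨convex_Ioo _ _, fun x hx y hy p q hp hq hpq => ?_⟩
  have hx2 : x / 2 ∈ Set.Ioo (-c) c := by
    constructor
    · have := hx.1; linarith
    · have := hx.2; linarith
  have hy2 : y / 2 ∈ Set.Ioo (-c) c := by
    constructor
    · have := hy.1; linarith
    · have := hy.2; linarith
  have h2 := h.2 hx2 hy2 hp hq hpq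
  simp only [smul_eq_mul] at h2 ⊢
  have harg : (p * x + q * y) / 2 = p * (x / 2) + q * (y / 2) := by ring
  rw [harg]
  exact h2

end LambdaAux

open LambdaAux in
theorem lambda_concavity (n : ℕ) (α : ℝ) (hα0 : 0 < α) (hα : α < min 2 (n : ℝ)) :
    (∀ σ ∈ Set.Ioo (-(((n : ℝ) - α) / 2)) (((n : ℝ) - α) / 2),
        Gamma (((n : ℝ) + α) / 4 - (-σ) / 2) * Gamma (((n : ℝ) + α) / 4 + (-σ) / 2) /
            (Gamma (((n : ℝ) - α) / 4 + (-σ) / 2) * Gamma (((n : ℝ) - α) / 4 - (-σ) / 2)) =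
          Gamma (((n : ℝ) + α) / 4 - σ / 2) * Gamma (((n : ℝ) + α) / 4 + σ / 2) /
            (Gamma (((n : ℝ) - α) / 4 + σ / 2) * Gamma (((n : ℝ) - α) / 4 - σ / 2))) ∧
    ConcaveOn ℝ (Set.Ioo (-(((n : ℝ) - α) / 2)) (((n : ℝ) - α) / 2))
      (fun σ => Gamma (((n : ℝ) + α) / 4 - σ / 2) * Gamma (((n : ℝ) + α) / 4 + σ / 2) /
          (Gamma (((n : ℝ) - α) / 4 + σ / 2) * Gamma (((n : ℝ) - α) / 4 - σ / 2))) ∧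
    (∀ σ ∈ Set.Ioo (-(((n : ℝ) - α) / 2)) (((n : ℝ) - α) / 2),
        Gamma (((n : ℝ) + α) / 4 - σ / 2) * Gamma (((n : ℝ) + α) / 4 + σ / 2) /
            (Gamma (((n : ℝ) - α) / 4 + σ / 2) * Gamma (((n : ℝ) - α) / 4 - σ / 2)) ≤
          (Gamma (((n : ℝ) + α) / 4) / Gamma (((n : ℝ) - α) / 4)) ^ 2) ∧
    Gamma (((n : ℝ) + α) / 4 - 0 / 2) * Gamma (((n : ℝ) + α) / 4 + 0 / 2) /
        (Gamma (((n : ℝ) - α) / 4 + 0 / 2) * Gamma (((n : ℝ) - α) / 4 - 0 / 2)) =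
      (Gamma (((n : ℝ) + α) / 4) / Gamma (((n : ℝ) - α) / 4)) ^ 2 := by
  have hα2 : α < 2 := lt_of_lt_of_le hα (min_le_left _ _)
  have hαn : α < (n : ℝ) := lt_of_lt_of_le hα (min_le_right _ _)
  set A := ((n : ℝ) + α) / 4 with hA
  set B := ((n : ℝ) - α) / 4 with hB
  have hB0 : 0 < B := by rw [hB]; linarith
  have hBA : B < A := by rw [hA, hB]; linarith
  have hab1 : A < B + 1 := by rw [hA, hB]; linarith
  have hsetE : (((n : ℝ) - α) / 2) = 2 * B := by rw [hB]; ring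
  have hconc : ConcaveOn ℝ (Set.Ioo (-(((n : ℝ) - α) / 2)) (((n : ℝ) - α) / 2))
      (fun σ => Gamma (A - σ / 2) * Gamma (A + σ / 2) /
        (Gamma (B + σ / 2) * Gamma (B - σ / 2))) := by
    rw [hsetE]
    exact half_scale (master hB0 hBA hab1)
  have hsym : ∀ σ : ℝ,
      Gamma (A - (-σ) / 2) * Gamma (A + (-σ) / 2) /
        (Gamma (B + (-σ) / 2) * Gamma (B - (-σ) / 2)) =
      Gamma (A - σ / 2) * Gamma (A + σ / 2) /
        (Gamma (B + σ / 2) * Gamma (B - σ / 2)) := by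
    intro σ
    simp only [neg_div, sub_neg_eq_add, ← sub_eq_add_neg]
    ring
  have hval : Gamma (A - 0 / 2) * Gamma (A + 0 / 2) /
      (Gamma (B + 0 / 2) * Gamma (B - 0 / 2)) = (Gamma A / Gamma B) ^ 2 := by
    have h0 : (0:ℝ) / 2 = 0 := by norm_num
    rw [h0, sub_zero, add_zero, add_zero, sub_zero, div_pow, sq, sq]
  refine ⟨fun σ _ => hsym σ, hconc, ?_, hval⟩
  intro σ hσ
  have hmem : -σ ∈ Set.Ioo (-(((n : ℝ) - α) / 2)) (((n : ℝ) - α) / 2) := by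
    constructor
    · have := hσ.2; linarith
    · have := hσ.1; linarith
  have hc := hconc.2 hσ hmem (by norm_num : (0:ℝ) ≤ 1/2) (by norm_num : (0:ℝ) ≤ 1/2)
    (by norm_num)
  simp only [smul_eq_mul] at hc
  have hz : (1/2 : ℝ) * σ + (1/2 : ℝ) * (-σ) = 0 := by ring
  rw [hz, hsym σ] at hc
  rw [hval] at hc
  linarith
end
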